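/- The generating function of the bi-periodic Jacobsthal matrix sequence satisfies (1 − (ab+4)x² + 4x⁴)·∑_{m≥0} J_m x^m = J_0 + J_1 x + (a·J_1 − (ab+2)·J_0)·x² + (2b·J_0 − 2·J_1)·x³ as an identity of formal power series with 2×2 real matrix coefficients. -/

import Mathlib

noncomputable def JM (a b : ℝ) : ℕ → Matrix (Fin 2) (Fin 2) ℝ
  | 0 => 1
  | 1 => !![b, 2 * b / a; 1, 0]
  | n + 2 => (if Even (n + 2) then a else b) • JM a b (n + 1) + (2 : ℝ) • JM a b n

lemma JM_two (a b : ℝ) : JM a b 2 = a • JM a b 1 + (2 : ℝ) • JM a b 0 := by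
  show (if Even (0 + 2) then a else b) • JM a b (0 + 1) + (2 : ℝ) • JM a b 0 = _
  rw [if_pos (by decide)]

lemma JM_three (a b : ℝ) : JM a b 3 = b • JM a b 2 + (2 : ℝ) • JM a b 1 := by
  show (if Even (1 + 2) then a else b) • JM a b (1 + 1) + (2 : ℝ) • JM a b 1 = _
  rw [if_neg (by decide)]

lemma JM_rec4 (a b : ℝ) (n : ℕ) :
    JM a b (n + 4) = (a * b + 4) • JM a b (n + 2) - (4 : ℝ) • JM a b n := by
  have h4 : JM a b (n + 4)
      = (if Even (n + 4) then a else b) • JM a b (n + 3) + (2 : ℝ) • JM a b (n + 2) := rfl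
  have h3 : JM a b (n + 3)
      = (if Even (n + 3) then a else b) • JM a b (n + 2) + (2 : ℝ) • JM a b (n + 1) := rfl
  have h2 : JM a b (n + 2)
      = (if Even (n + 2) then a else b) • JM a b (n + 1) + (2 : ℝ) • JM a b n := rfl
  rcases Nat.even_or_odd n with he | ho
  · have e4 : Even (n + 4) := by simp [Nat.even_add, he] <;> decide
    have e3 : ¬ Even (n + 3) := by simp [Nat.even_add, he] <;> decide
    have e2 : Even (n + 2) := by simp [Nat.even_add, he] <;> decide
    rw [if_pos e4] at h4; rw [if_neg e3] at h3; rw [if_pos e2] at h2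
    rw [h4, h3, h2]
    module
  · have ho' : ¬ Even n := Nat.not_even_iff_odd.mpr ho
    have e4 : ¬ Even (n + 4) := by simp [Nat.even_add, ho'] <;> decide
    have e3 : Even (n + 3) := by simp [Nat.even_add, ho'] <;> decide
    have e2 : ¬ Even (n + 2) := by simp [Nat.even_add, ho'] <;> decide
    rw [if_neg e4] at h4; rw [if_pos e3] at h3; rw [if_neg e2] at h2
    rw [h4, h3, h2]
    module

open PowerSeries in
theorem stmt5 (a b : ℝ) (ha : a ≠ 0) (hb : b ≠ 0) :
    (1 - C ((a * b + 4) • (1 : Matrix (Fin 2) (Fin 2) ℝ)) * X ^ 2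
        + C ((4 : ℝ) • (1 : Matrix (Fin 2) (Fin 2) ℝ)) * X ^ 4)
        * PowerSeries.mk (JM a b)
      = C (JM a b 0)
        + C (JM a b 1) * X
        + C (a • JM a b 1 - (a * b + 2) • JM a b 0) * X ^ 2
        + C ((2 * b) • JM a b 0 - (2 : ℝ) • JM a b 1) * X ^ 3 := by
  apply PowerSeries.ext
  intro n
  rw [add_mul, sub_mul, one_mul, mul_assoc, mul_assoc]
  simp only [map_add, map_sub, coeff_C_mul, coeff_X_pow_mul', coeff_mul_X_pow',
    PowerSeries.coeff_mk, PowerSeries.coeff_one, coeff_C, PowerSeries.coeff_X]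
  have hsm : ∀ (r : ℝ) (M : Matrix (Fin 2) (Fin 2) ℝ),
      (r • (1 : Matrix (Fin 2) (Fin 2) ℝ)) * M = r • M := by
    intro r M; rw [smul_mul_assoc, one_mul]
  match n with
  | 0 => norm_num
  | 1 => norm_num
  | 2 =>
      norm_num [hsm]
      rw [JM_two]
      module
  | 3 =>
      norm_num [hsm]
      rw [JM_three, JM_two]
      module
  | (m + 4) =>
      have e2 : m + 4 - 2 = m + 2 := by omega
      have e3 : m + 4 - 3 = m + 1 := by omega
      have e4 : m + 4 - 4 = m := by omega
      have l2 : (2 : ℕ) ≤ m + 4 := by omega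
      have l3 : (3 : ℕ) ≤ m + 4 := by omega
      have l4 : (4 : ℕ) ≤ m + 4 := by omega
      have n0 : ¬ (m + 4 = 0) := by omega
      have n1 : ¬ (m + 4 = 1) := by omega
      have p2 : ¬ (m + 2 = 0) := by omega
      have p1 : ¬ (m + 1 = 0) := by omega
      simp only [e2, e3, e4]
      simp only [if_pos l2, if_pos l3, if_pos l4, if_neg n0, if_neg n1, if_neg p2, if_neg p1]
      rw [JM_rec4 a b m, hsm, hsm]
      simp only [mul_zero, mul_one, sub_zero, add_zero, zero_add]
      abel
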